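/- Let W be a finite group of orthogonal reflections of ℝⁿ, Δ₊ a finite set of nonzero linear functionals such that for each λ ∈ Δ₊ the orthogonal reflection s_λ across the hyperplane λ⁻¹(0) satisfies ρ ∘ s_λ = ρ, where ρ : ℝⁿ → ℝ is a differentiable strictly convex function. Then for every x with λ(x) > 0 for all λ ∈ Δ₊ (i.e., x in the open chamber C), one has λ(∇ρ(x)) > 0 for all λ ∈ Δ₊; that is, ∇ρ maps C into C. -/

import Mathlib

local notation "⟪" x ", " y "⟫" => @inner ℝ _ _ x y

/-- Tangent-line strict inequality: if `f` is strictly convex and differentiable at `x`,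
and `f y ≤ f x` with `y ≠ x`, then the directional derivative at `x` toward `y` is negative. -/
lemma aux_fderiv_neg {E : Type*} [NormedAddCommGroup E] [InnerProductSpace ℝ E]
    {f : E → ℝ} (hf : StrictConvexOn ℝ Set.univ f) {x y : E}
    (hd : DifferentiableAt ℝ f x) (hxy : y ≠ x) (hfy : f y ≤ f x) :
    fderiv ℝ f x (y - x) < 0 := by
  set v : E := y - x with hv
  have hv0 : v ≠ 0 := sub_ne_zero.mpr hxy
  set g : ℝ → ℝ := fun t => f (x + t • v) with hg
  -- g is strictly convex on univ
  have hgconv : StrictConvexOn ℝ (Set.univ : Set ℝ) g := by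
    refine ⟨convex_univ, ?_⟩
    intro a _ b _ hab p q hp hq hpq
    have key : x + (p * a + q * b) • v = p • (x + a • v) + q • (x + b • v) := by
      have : (p + q) • x = x := by rw [hpq, one_smul]
      rw [smul_add, smul_add, add_add_add_comm, ← add_smul, this]
      module
    have hne : x + a • v ≠ x + b • v := by
      intro h
      apply hab
      have := add_left_cancel h
      have := sub_eq_zero.mpr this
      rw [← sub_smul] at this
      rcases smul_eq_zero.mp this with h' | h'
      · exact sub_eq_zero.mp h'
      · exact absurd h' hv0
    have := hf.2 (Set.mem_univ (x + a • v)) (Set.mem_univ (x + b • v)) hne hp hq hpq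
    simpa [g, key] using this
  -- g has derivative fderiv f x v at 0
  have hline : HasDerivAt (fun t : ℝ => x + t • v) v (0 : ℝ) := by
    simpa using ((hasDerivAt_id (0 : ℝ)).smul_const v).const_add x
  have hgd : HasDerivAt g (fderiv ℝ f x v) 0 := by
    have h0 : x + (0 : ℝ) • v = x := by simp
    have hF : HasFDerivAt f (fderiv ℝ f x) (x + (0 : ℝ) • v) := by
      rw [h0]; exact hd.hasFDerivAt
    exact hF.comp_hasDerivAt 0 hline
  have hslope := hgconv.lt_slope_of_hasDerivAt (Set.mem_univ (0 : ℝ)) (Set.mem_univ (1 : ℝ))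
    one_pos hgd
  have hg0 : g 0 = f x := by simp [g]
  have hg1 : g 1 = f y := by simp [g, v]
  have : slope g 0 1 ≤ 0 := by
    rw [slope_def_field]
    simp [hg0, hg1]
    linarith
  linarith [hslope]

theorem stmt_11 (n : ℕ) (Δp : Finset (EuclideanSpace ℝ (Fin n)))
    (hΔ0 : ∀ l ∈ Δp, l ≠ 0)
    (ρ : EuclideanSpace ℝ (Fin n) → ℝ) (hdiff : Differentiable ℝ ρ)
    (hsconv : StrictConvexOn ℝ Set.univ ρ)
    (hinv : ∀ l ∈ Δp, ∀ x, ρ (x - (2 * ⟪l, x⟫ / ‖l‖ ^ 2) • l) = ρ x) :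
    ∀ x : EuclideanSpace ℝ (Fin n),
      (∀ l ∈ Δp, 0 < ⟪l, x⟫) → ∀ l ∈ Δp, 0 < ⟪l, gradient ρ x⟫ := by
  intro x hx l hl
  have hl0 := hΔ0 l hl
  have hlx := hx l hl
  have hln : (0:ℝ) < ‖l‖ ^ 2 := pow_pos (norm_pos_iff.mpr hl0) 2
  set c : ℝ := 2 * ⟪l, x⟫ / ‖l‖ ^ 2 with hc
  have hcpos : 0 < c := div_pos (by linarith) hln
  set y : EuclideanSpace ℝ (Fin n) := x - c • l with hy
  have hyx : y ≠ x := by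
    simp only [hy, sub_eq_self, ne_eq]
    intro h
    rcases smul_eq_zero.mp h with h' | h'
    · exact absurd h' hcpos.ne'
    · exact hl0 h'
  have hfy : ρ y = ρ x := hinv l hl x
  have hneg := aux_fderiv_neg hsconv (hdiff x) hyx hfy.le
  have hgrad : fderiv ℝ ρ x (y - x) = ⟪gradient ρ x, y - x⟫ := by
    have h1 : HasFDerivAt ρ ((InnerProductSpace.toDual ℝ _) (gradient ρ x)) x :=
      (hdiff x).hasGradientAt.hasFDerivAt
    rw [h1.fderiv]
    simp [InnerProductSpace.toDual_apply_apply]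
  rw [hgrad] at hneg
  have hyxv : y - x = -(c • l) := by simp [hy]
  rw [hyxv, inner_neg_right, real_inner_smul_right] at hneg
  have : 0 < ⟪gradient ρ x, l⟫ := by
    by_contra h
    push_neg at h
    nlinarith
  rwa [real_inner_comm]
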